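/- Let $N$ be a finitely generated module over $A_R = \mathbb{C}[u,t][[q]]/(ut-q)$ admitting a connection $D_N$ along the derivation $D_{A_R} = t\partial_t - u\partial_u$ (i.e. an additive map with $D_N(fm) = D_{A_R}(f)m + fD_N(m)$). Then multiplication by $t-1$ is injective on $N$. -/

import Mathlib

set_option maxHeartbeats 1000000

section HilbertBasisPowerSeries

open PowerSeries

variable {R : Type*} [CommRing R]

theorem powerSeries_isNoetherianRing [IsNoetherianRing R] :
    IsNoetherianRing (PowerSeries R) := by
  rw [isNoetherianRing_iff_ideal_fg]
  intro I
  -- the ideal of n-th coefficients of elements of I divisible by X^n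
  set Jfun : ℕ → Ideal R := fun n => Submodule.map (PowerSeries.coeff n)
      ((I ⊓ Ideal.span {(X : R⟦X⟧) ^ n}).restrictScalars R) with hJfun
  have hJmono : Monotone Jfun := by
    apply monotone_nat_of_le_succ
    intro n r hr
    obtain ⟨g, hg, hgr⟩ := hr
    refine ⟨X * g, ?_, by rw [coeff_succ_X_mul]; exact hgr⟩
    simp only [SetLike.mem_coe, Submodule.restrictScalars_mem, Ideal.mem_inf] at hg
    obtain ⟨h1, h2⟩ := hg
    simp only [SetLike.mem_coe, Submodule.restrictScalars_mem, Ideal.mem_inf]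
    refine ⟨Ideal.mul_mem_left _ _ h1, ?_⟩
    rw [Ideal.mem_span_singleton] at h2 ⊢
    rw [pow_succ']
    exact mul_dvd_mul_left X h2
  set J : ℕ →o Ideal R := ⟨Jfun, hJmono⟩ with hJ
  obtain ⟨n₀, hn₀⟩ := monotone_stabilizes_iff_noetherian.mpr inferInstance J
  -- witness families
  have H : ∀ n : ℕ, ∃ (k : ℕ) (f : Fin k → R⟦X⟧), (∀ i, f i ∈ I) ∧
      (∀ i, (X : R⟦X⟧) ^ n ∣ f i) ∧
      Submodule.span R (Set.range fun i => PowerSeries.coeff n (f i)) = Jfun n := by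
    intro n
    obtain ⟨s, hs⟩ := IsNoetherian.noetherian (Jfun n)
    have hmem : ∀ r : s, (r : R) ∈ Jfun n := by
      intro r; rw [← hs]; exact Submodule.subset_span r.2
    choose pre hpre hcoeff using fun r : s => hmem r
    refine ⟨s.card, fun i => pre (s.equivFin.symm i), fun i => ?_, fun i => ?_, ?_⟩
    · have := hpre (s.equivFin.symm i)
      simp only [SetLike.mem_coe, Submodule.restrictScalars_mem, Ideal.mem_inf] at this
      exact this.1
    · have := hpre (s.equivFin.symm i)
      simp only [SetLike.mem_coe, Submodule.restrictScalars_mem, Ideal.mem_inf] at this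
      rw [← Ideal.mem_span_singleton]
      exact this.2
    · have : (Set.range fun i => PowerSeries.coeff n (pre (s.equivFin.symm i))) =
          (s : Set R) := by
        ext r
        constructor
        · rintro ⟨i, rfl⟩; simp only; rw [hcoeff]; exact (s.equivFin.symm i).2
        · intro hr
          exact ⟨s.equivFin ⟨r, hr⟩, by simp only [Equiv.symm_apply_apply, hcoeff]⟩
      rw [this, hs]
  choose k f hfI hfdvd hspan using H
  set G : Set R⟦X⟧ := ⋃ n : Fin (n₀+1), Set.range (f n) with hG
  have hGfin : G.Finite := Set.finite_iUnion fun n => Set.finite_range _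
  set E : Ideal R⟦X⟧ := Ideal.span G with hE
  have hGI : ∀ g ∈ G, g ∈ I := by
    intro g hg
    simp only [hG, Set.mem_iUnion] at hg
    obtain ⟨n, i, rfl⟩ := hg
    exact hfI _ _
  have hfG : ∀ n, n ≤ n₀ → ∀ i, f n i ∈ E := by
    intro n hn i
    apply Ideal.subset_span
    simp only [hG, Set.mem_iUnion]
    exact ⟨⟨n, by omega⟩, i, rfl⟩
  have hcoeffJ : ∀ (d : R⟦X⟧) (n : ℕ), d ∈ I → (X : R⟦X⟧) ^ n ∣ d →
      PowerSeries.coeff n d ∈ Jfun n := by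
    intro d n hdI hdd
    exact ⟨d, by
      simp only [SetLike.mem_coe, Submodule.restrictScalars_mem, Ideal.mem_inf]
      exact ⟨hdI, Ideal.mem_span_singleton.mpr hdd⟩, rfl⟩
  refine ⟨hGfin.toFinset, ?_⟩
  rw [hGfin.coe_toFinset]
  apply le_antisymm
  · rw [Ideal.span_le]
    intro g hg
    exact hGI g hg
  intro h hh
  have stage1 : ∀ n, n ≤ n₀ → ∃ g ∈ E, h - g ∈ I ∧ (X : R⟦X⟧) ^ n ∣ (h - g) := by
    intro n
    induction n with
    | zero => exact fun _ => ⟨0, zero_mem _, by simpa using hh, by simp⟩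
    | succ n ih =>
      intro hn
      obtain ⟨g, hgE, hgI, hgd⟩ := ih (Nat.le_of_succ_le hn)
      have hJ1 : PowerSeries.coeff n (h - g) ∈ Jfun n := hcoeffJ _ _ hgI hgd
      rw [← hspan n] at hJ1
      obtain ⟨c, hc⟩ := (Submodule.mem_span_range_iff_exists_fun R).mp hJ1
      have hsub : h - (g + ∑ i, PowerSeries.C (c i) * f n i)
          = (h - g) - ∑ i, PowerSeries.C (c i) * f n i := by ring
      refine ⟨g + ∑ i, PowerSeries.C (c i) * f n i, ?_, ?_, ?_⟩
      · exact add_mem hgE (Ideal.sum_mem _ fun i _ =>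
          Ideal.mul_mem_left _ _ (hfG n (by omega) i))
      · rw [hsub]
        exact Submodule.sub_mem _ hgI (Ideal.sum_mem _ fun i _ =>
          Ideal.mul_mem_left _ _ (hfI n i))
      · rw [X_pow_dvd_iff]
        intro m hm
        rw [hsub, map_sub, map_sum]
        rcases lt_or_eq_of_le (Nat.lt_succ_iff.mp hm) with hm' | hm'
        · have h0 : PowerSeries.coeff m (h - g) = 0 := (X_pow_dvd_iff.mp hgd) m hm'
          have h1 : ∀ i : Fin (k n), PowerSeries.coeff m (PowerSeries.C (c i) * f n i) = 0 := by
            intro i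
            rw [coeff_C_mul, (X_pow_dvd_iff.mp (hfdvd n i)) m hm', mul_zero]
          simp [h0, h1]
        · subst hm'
          rw [sub_eq_zero, ← hc]
          apply Finset.sum_congr rfl
          intro i _
          rw [coeff_C_mul, smul_eq_mul]
  obtain ⟨g, hgE, h2I, h2d⟩ := stage1 n₀ le_rfl
  -- stage 2
  have key : ∀ (m : ℕ) (d : R⟦X⟧), d ∈ I → (X : R⟦X⟧) ^ (n₀ + m) ∣ d →
      ∃ c : Fin (k n₀) → R, PowerSeries.coeff (n₀ + m) d
        = ∑ i, c i * PowerSeries.coeff n₀ (f n₀ i) := by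
    intro m d hdI hdd
    have h1 : PowerSeries.coeff (n₀ + m) d ∈ Jfun (n₀ + m) := hcoeffJ _ _ hdI hdd
    have h2 : Jfun (n₀ + m) = Jfun n₀ := (hn₀ (n₀ + m) le_self_add).symm
    rw [h2, ← hspan n₀] at h1
    obtain ⟨c, hc⟩ := (Submodule.mem_span_range_iff_exists_fun R).mp h1
    exact ⟨c, by rw [← hc]; exact Finset.sum_congr rfl fun i _ => by rw [smul_eq_mul]⟩
  have step : ∀ (m : ℕ) (d : R⟦X⟧), d ∈ I → (X : R⟦X⟧) ^ (n₀ + m) ∣ d →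
      ∃ (c : Fin (k n₀) → R) (d' : R⟦X⟧), d' ∈ I ∧ (X : R⟦X⟧) ^ (n₀ + m + 1) ∣ d' ∧
        d = d' + ∑ i, PowerSeries.C (c i) * X ^ m * f n₀ i := by
    intro m d hdI hdd
    obtain ⟨c, hc⟩ := key m d hdI hdd
    have hterm : ∀ (N : ℕ) (i : Fin (k n₀)),
        PowerSeries.coeff N (PowerSeries.C (c i) * X ^ m * f n₀ i)
          = if m ≤ N then c i * PowerSeries.coeff (N - m) (f n₀ i) else 0 := by
      intro N i
      rw [mul_assoc, coeff_C_mul, coeff_X_pow_mul']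
      split <;> simp
    refine ⟨c, d - ∑ i, PowerSeries.C (c i) * X ^ m * f n₀ i, ?_, ?_, by ring⟩
    · exact Submodule.sub_mem _ hdI (Ideal.sum_mem _ fun i _ =>
        Ideal.mul_mem_left _ _ (hfI n₀ i))
    · rw [X_pow_dvd_iff]
      intro N hN
      rw [map_sub, map_sum]
      rcases lt_or_ge N (n₀ + m) with hN' | hN'
      · have h0 : PowerSeries.coeff N d = 0 := X_pow_dvd_iff.mp hdd N hN'
        have h1 : ∀ i : Fin (k n₀),
            PowerSeries.coeff N (PowerSeries.C (c i) * X ^ m * f n₀ i) = 0 := by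
          intro i
          rw [hterm N i]
          split
          · rw [X_pow_dvd_iff.mp (hfdvd n₀ i) (N - m) (by omega), mul_zero]
          · rfl
        simp [h0, h1]
      · have hNeq : N = n₀ + m := by omega
        subst hNeq
        rw [hc, sub_eq_zero]
        apply Finset.sum_congr rfl
        intro i _
        rw [hterm _ i, if_pos (Nat.le_add_left m n₀), Nat.add_sub_cancel]
  choose cfun dfun hd'I hd'dvd hdeq using step
  let T : ∀ m : ℕ, {d : R⟦X⟧ // d ∈ I ∧ (X : R⟦X⟧) ^ (n₀ + m) ∣ d} := fun m =>
    Nat.rec (motive := fun m => {d : R⟦X⟧ // d ∈ I ∧ (X : R⟦X⟧) ^ (n₀ + m) ∣ d})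
      ⟨h - g, h2I, by simpa using h2d⟩
      (fun m prev => ⟨dfun m prev.1 prev.2.1 prev.2.2,
        hd'I m prev.1 prev.2.1 prev.2.2, hd'dvd m prev.1 prev.2.1 prev.2.2⟩) m
  let a : ℕ → Fin (k n₀) → R := fun m => cfun m (T m).1 (T m).2.1 (T m).2.2
  have hTrec : ∀ m, (T m).1 = (T (m+1)).1 + ∑ i, PowerSeries.C (a m i) * X ^ m * f n₀ i :=
    fun m => hdeq m (T m).1 (T m).2.1 (T m).2.2
  have hpartial : ∀ m, h - g
      = (T m).1 + ∑ j ∈ Finset.range m, ∑ i, PowerSeries.C (a j i) * X ^ j * f n₀ i := by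
    intro m
    induction m with
    | zero => simp only [Finset.range_zero, Finset.sum_empty, add_zero]; rfl
    | succ m ih => rw [Finset.sum_range_succ, ih, hTrec m]; ring
  have hfinal : h - g = ∑ i, (PowerSeries.mk fun m => a m i) * f n₀ i := by
    ext N
    have hp := congrArg (PowerSeries.coeff N) (hpartial (N+1))
    have hz : PowerSeries.coeff N (T (N+1)).1 = 0 :=
      X_pow_dvd_iff.mp (T (N+1)).2.2 N (by omega)
    rw [map_add, hz, zero_add] at hp
    rw [hp]
    have hR : ∀ i : Fin (k n₀),
        PowerSeries.coeff N ((PowerSeries.mk fun m => a m i) * f n₀ i)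
          = ∑ j ∈ Finset.range (N+1), a j i * PowerSeries.coeff (N - j) (f n₀ i) := by
      intro i
      rw [PowerSeries.coeff_mul, Finset.Nat.sum_antidiagonal_eq_sum_range_succ_mk]
      exact Finset.sum_congr rfl fun j _ => by rw [PowerSeries.coeff_mk]
    simp only [map_sum]
    rw [Finset.sum_comm]
    apply Finset.sum_congr rfl
    intro i _
    rw [hR i]
    apply Finset.sum_congr rfl
    intro j hj
    rw [mul_assoc, coeff_C_mul, coeff_X_pow_mul',
      if_pos (by simp only [Finset.mem_range] at hj; omega)]
  have hmemE : h - g ∈ E := by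
    rw [hfinal]
    exact Ideal.sum_mem _ fun i _ => Ideal.mul_mem_left _ _ (hfG n₀ le_rfl i)
  have hhg : h = g + (h - g) := by ring
  rw [hhg]
  exact add_mem hgE hmemE

end HilbertBasisPowerSeries

set_option synthInstance.maxHeartbeats 1000000
set_option maxHeartbeats 1000000

noncomputable section

/-- Polynomials `ℂ[u,t]` with `u = X 0`, `t = X 1`. -/
abbrev Pol2 : Type := MvPolynomial (Fin 2) ℂ

/-- The ring `A_R = ℂ[u,t][[q]]/(ut - q)`. -/
abbrev ARing : Type :=
  (PowerSeries Pol2) ⧸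
    (Ideal.span {(PowerSeries.C : Pol2 →+* PowerSeries Pol2) (MvPolynomial.X 0 * MvPolynomial.X 1) - PowerSeries.X})

instance : Algebra ℂ ARing := Ideal.Quotient.algebra ℂ
instance : Module ℂ ARing := Algebra.toModule

instance : IsNoetherianRing (PowerSeries Pol2) := powerSeries_isNoetherianRing

instance : IsNoetherianRing ARing := by
  unfold ARing
  infer_instance

/-- The element `u` of `A_R`. -/
def uA : ARing := Ideal.Quotient.mk _ ((PowerSeries.C : Pol2 →+* PowerSeries Pol2) (MvPolynomial.X 0))

/-- The element `t` of `A_R`. -/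
def tA : ARing := Ideal.Quotient.mk _ ((PowerSeries.C : Pol2 →+* PowerSeries Pol2) (MvPolynomial.X 1))

/-- The element `q` of `A_R`. -/
def qA : ARing := Ideal.Quotient.mk _ (PowerSeries.X : PowerSeries Pol2)

/-- Let `N` be a finitely generated module over `A_R = ℂ[u,t][[q]]/(ut-q)` admitting a
connection along the derivation `D_{A_R} = t∂t - u∂u` (the derivation with `D t = t`,
`D u = -u`).  Then multiplication by `t - 1` is injective on `N`. -/
theorem stmt2 (DA : Derivation ℂ ARing ARing) (hDu : DA uA = -uA) (hDt : DA tA = tA)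
    (N : Type) [AddCommGroup N] [Module ARing N] [Module.Finite ARing N]
    (DN : N →+ N) (hDN : ∀ (f : ARing) (x : N), DN (f • x) = DA f • x + f • DN x) :
    Function.Injective (fun x : N => (tA - 1) • x) := by
  set a : ARing := tA - 1 with ha
  have hDa : DA a = tA := by
    rw [ha, map_sub, hDt, Derivation.map_one_eq_zero, sub_zero]
  have key : ∀ z : N, a • z = 0 → z = 0 := by
    intro z hz
    have htz : tA • z = z := by
      have h0 : (a + 1) • z = z := by rw [add_smul, hz, zero_add, one_smul]
      have h1 : tA = a + 1 := by rw [ha]; ring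
      rw [h1]; exact h0
    have hT : ∀ n : ℕ, ∃ w : N, z = a ^ n • w := by
      intro n
      induction n with
      | zero => exact ⟨z, by rw [pow_zero, one_smul]⟩
      | succ n ih =>
        obtain ⟨w, hw⟩ := ih
        have hw2 : a ^ (n + 1) • w = 0 := by
          rw [pow_succ', mul_smul, ← hw, hz]
        have hD := hDN (a ^ (n + 1)) w
        rw [hw2, map_zero] at hD
        have hDpow : DA (a ^ (n + 1)) = ((n + 1 : ℕ) : ARing) * (a ^ n * tA) := by
          rw [Derivation.leibniz_pow]
          simp only [Nat.add_sub_cancel]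
          rw [hDa, nsmul_eq_mul, smul_eq_mul]
        have h1 : (a ^ n * tA) • w = z := by
          have hh : tA • (a ^ n • w) = z := by rw [← hw]; exact htz
          have hcomm : a ^ n * tA = tA * a ^ n := mul_comm _ _
          rw [hcomm, mul_smul]; exact hh
        have h2 : ((n + 1 : ℕ) : ARing) • z + a ^ (n + 1) • DN w = 0 := by
          rw [hDpow, mul_smul, h1] at hD
          exact hD.symm
        set c : ARing := algebraMap ℂ ARing (((n : ℂ) + 1)⁻¹) with hc
        have hcn : c * ((n + 1 : ℕ) : ARing) = 1 := by
          rw [hc, show (((n + 1 : ℕ)) : ARing) = algebraMap ℂ ARing (((n + 1 : ℕ)) : ℂ) from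
            (map_natCast _ _).symm, ← map_mul,
            show (((n + 1 : ℕ)) : ℂ) = (n : ℂ) + 1 by push_cast; ring,
            inv_mul_cancel₀ (Nat.cast_add_one_ne_zero n), map_one]
        refine ⟨-(c • DN w), ?_⟩
        calc z = c • (((n + 1 : ℕ) : ARing) • z) := by rw [smul_smul, hcn, one_smul]
        _ = c • (-(a ^ (n + 1) • DN w)) := by rw [eq_neg_of_add_eq_zero_left h2]
        _ = a ^ (n + 1) • (-(c • DN w)) := by
            rw [smul_neg, smul_neg, smul_smul, mul_comm c (a ^ (n + 1)), mul_smul]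
    have hmem : z ∈ (⨅ i : ℕ, (Ideal.span {a}) ^ i • (⊤ : Submodule ARing N)) := by
      rw [Submodule.mem_iInf]
      intro i
      obtain ⟨w, hw⟩ := hT i
      rw [hw]
      exact Submodule.smul_mem_smul (Ideal.pow_mem_pow (Ideal.mem_span_singleton_self a) i)
        trivial
    obtain ⟨r, hr⟩ := (Ideal.mem_iInf_smul_pow_eq_bot_iff (Ideal.span {a}) z).mp hmem
    obtain ⟨b, hb⟩ := Ideal.mem_span_singleton'.mp r.2
    rw [← hr, ← hb, mul_smul, hz, smul_zero]
  intro x y hxy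
  have hxy' : a • x = a • y := hxy
  have h0 : a • (x - y) = 0 := by rw [smul_sub, hxy', sub_self]
  have := key _ h0
  rw [← sub_eq_zero]
  exact this

end
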